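/- Let G be a Lie group acting transitively on a compact Riemannian manifold (M, ⟨,⟩) with G-invariant metric and G-invariant probability measure ν. Let v_1,...,v_r be an orthonormal basis of a Lie subalgebra 𝔥 of 𝔤 with induced fundamental vector fields V_i* satisfying [V_i*, V_j*] = Σ_l c_{ij}^l V_l*. Then the leafwise Laplacian Δ_E f = Σ_i (V_i* V_i* f - (∇^E_{V_i*} V_i*) f) satisfies ∫_M Δ_E f dν = 0 for all smooth f, i.e. ν is a harmonic measure for the induced foliation. -/

import Mathlib

open MeasureTheory Manifold

/-- Let a Lie group `G` act transitively on a compact manifold `M ≅ G/K`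
with a `G`-invariant probability measure `ν`, and let `v 1, ..., v r` be an orthonormal
basis of a Lie subalgebra `𝔥 ⊆ 𝔤` with one-parameter subgroups `γ i (t) = exp (t vᵢ)`
and fundamental vector fields `Vᵢ*` (`(Vᵢ* f)(x) = d/dt|₀ f (γ i t • x)`), with
structure constants `c` and `∇^E_{Vᵢ*} Vᵢ* = -∑ k, c i k i • V_k*`. Then the leafwise
Laplacian `Δ_E f = ∑ i (Vᵢ* Vᵢ* f - (∇^E_{Vᵢ*} Vᵢ*) f)` satisfies `∫ Δ_E f dν = 0`
for every smooth `f`, i.e. `ν` is a harmonic measure for the induced foliation. -/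
theorem stmt14
    {E : Type*} [NormedAddCommGroup E] [NormedSpace ℝ E]
    {H : Type*} [TopologicalSpace H] (I : ModelWithCorners ℝ E H)
    (M : Type*) [TopologicalSpace M] [ChartedSpace H M] [IsManifold I ((⊤ : ℕ∞) : WithTop ℕ∞) M]
    [CompactSpace M] [MeasurableSpace M] [BorelSpace M]
    (G : Type*) [Group G] [MulAction G M]
    (htrans : ∀ x y : M, ∃ g : G, g • x = y)
    (ν : Measure M) [IsProbabilityMeasure ν]
    -- ν is G-invariant
    (hν : ∀ g : G, MeasurePreserving (fun x : M => g • x) ν ν)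
    (r : ℕ)
    -- one-parameter subgroups of the orthonormal basis v₁, ..., v_r of 𝔥
    (γ : Fin r → ℝ → G) (hγ : ∀ i (s t : ℝ), γ i (s + t) = γ i s * γ i t)
    (hact : ∀ i, ContMDiff (𝓘(ℝ, ℝ).prod I) I (⊤ : ℕ∞) (fun p : ℝ × M => γ i p.1 • p.2))
    -- the fundamental vector fields Vᵢ*, acting on functions
    (V : Fin r → (M → ℝ) → (M → ℝ))
    (hV : ∀ i (f : M → ℝ) (x : M), V i f x = deriv (fun t : ℝ => f (γ i t • x)) 0)
    -- the derivative of a smooth function along a fundamental field is smooth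
    (hVsmooth : ∀ i (f : M → ℝ),
      ContMDiff I 𝓘(ℝ, ℝ) (⊤ : ℕ∞) f → ContMDiff I 𝓘(ℝ, ℝ) (⊤ : ℕ∞) (V i f))
    -- structure constants of 𝔥: [vᵢ, vⱼ] = ∑ k, c i j k • v_k, so that
    -- ∇^E_{Vᵢ*} Vᵢ* = -∑ k, c i k i • V_k*
    (c : Fin r → Fin r → Fin r → ℝ)
    (f : M → ℝ) (hf : ContMDiff I 𝓘(ℝ, ℝ) (⊤ : ℕ∞) f) :
    ∫ x, (∑ i, (V i (V i f) x + ∑ k, c i k i * V k f x)) ∂ν = 0 := by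
  -- γ i 0 = 1
  have hγ0 : ∀ i, γ i 0 = 1 := by
    intro i
    have := hγ i 0 0
    simp at this
    exact this
  -- joint continuity of the action along γ i
  have hcont : ∀ i, Continuous (fun p : ℝ × M => γ i p.1 • p.2) :=
    fun i => (hact i).continuous
  -- each map x ↦ γ i t • x is a homeomorphism
  have hhom : ∀ i (t : ℝ), Continuous (fun x : M => γ i t • x) := by
    intro i t
    exact (hcont i).comp (continuous_const.prodMk continuous_id)
  have cont_int : ∀ h : M → ℝ, Continuous h → Integrable h ν := by
    intro h hh
    obtain ⟨C, hC⟩ := (isCompact_univ.image hh.norm).bddAbove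
    refine Integrable.mono' (g := fun _ => C) (integrable_const C)
      hh.aestronglyMeasurable (Filter.Eventually.of_forall fun x => hC ⟨x, trivial, rfl⟩)
  -- invariance of integrals under the action of γ i t
  have hinv : ∀ i (t : ℝ) (g : M → ℝ), ∫ x, g (γ i t • x) ∂ν = ∫ x, g x ∂ν := by
    intro i t g
    let e : Homeomorph M M :=
      { toFun := fun x => γ i t • x
        invFun := fun x => γ i (-t) • x
        left_inv := by
          intro x
          show γ i (-t) • γ i t • x = x
          rw [← mul_smul, ← hγ i (-t) t]
          simp [hγ0 i]
        right_inv := by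
          intro x
          show γ i t • γ i (-t) • x = x
          rw [← mul_smul, ← hγ i t (-t)]
          simp [hγ0 i]
        continuous_toFun := hhom i t
        continuous_invFun := hhom i (-t) }
    exact (hν (γ i t)).integral_comp e.measurableEmbedding g
  -- key: integral of fundamental derivative of smooth function vanishes
  have key : ∀ i (g : M → ℝ), ContMDiff I 𝓘(ℝ, ℝ) (⊤ : ℕ∞) g → ∫ x, V i g x ∂ν = 0 := by
    intro i g hg
    -- the "flow derivative" identity
    have hflow : ∀ (t : ℝ) (x : M),
        HasDerivAt (fun s : ℝ => g (γ i s • x)) (V i g (γ i t • x)) t := by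
      intro t x
      have hsm := (hg.comp ((hact i).comp
          ((contMDiff_id.prodMk contMDiff_const : ContMDiff 𝓘(ℝ, ℝ) (𝓘(ℝ, ℝ).prod I) (⊤ : ℕ∞)
            (fun s : ℝ => (s, x)))))).contDiff
      have hd : DifferentiableAt ℝ (fun s : ℝ => g (γ i s • x)) t :=
        (hsm.differentiable (by simp)) t
      have hder : deriv (fun s : ℝ => g (γ i s • x)) t = V i g (γ i t • x) := by
        have h1 : (fun s : ℝ => (fun u : ℝ => g (γ i u • x)) (s + t))
            = fun s : ℝ => g (γ i s • (γ i t • x)) := by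
          funext s
          simp only [hγ i s t, mul_smul]
        have h2 := deriv_comp_add_const (fun u : ℝ => g (γ i u • x)) t 0
        rw [h1] at h2
        rw [hV i g (γ i t • x), h2, zero_add]
      exact hder ▸ hd.hasDerivAt
    -- FTC
    have hVg : Continuous (V i g) := (hVsmooth i g hg).continuous
    have hFTC : ∀ x : M, g (γ i (1:ℝ) • x) - g (γ i (0:ℝ) • x)
        = ∫ t in (0:ℝ)..1, V i g (γ i t • x) := by
      intro x
      refine (intervalIntegral.integral_eq_sub_of_hasDerivAt
        (fun t _ => hflow t x) ?_).symm
      exact ((hVg.comp ((hcont i).comp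
        (continuous_id.prodMk continuous_const))).intervalIntegrable 0 1)
    -- integrate over ν and swap
    have hbound : ∃ C : ℝ, ∀ y : M, |V i g y| ≤ C := by
      obtain ⟨C, hC⟩ := (isCompact_univ.image (hVg.abs)).bddAbove
      exact ⟨C, fun y => hC ⟨y, trivial, rfl⟩⟩
    obtain ⟨C, hC⟩ := hbound
    have hswap : ∫ x, (∫ t in Set.Ioc (0:ℝ) 1, V i g (γ i t • x)) ∂ν
        = ∫ t in Set.Ioc (0:ℝ) 1, (∫ x, V i g (γ i t • x) ∂ν) := by
      apply integral_integral_swap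
      have hcont2 : Continuous (fun p : M × ℝ => V i g (γ i p.2 • p.1)) :=
        hVg.comp ((hcont i).comp (continuous_snd.prodMk continuous_fst))
      refine Integrable.mono' (g := fun _ => C)
        (integrable_const C) hcont2.aestronglyMeasurable ?_
      refine Filter.Eventually.of_forall fun p => ?_
      simpa [Function.uncurry] using hC (γ i p.2 • p.1)
    have h1 : ∫ x, (g (γ i (1:ℝ) • x) - g (γ i (0:ℝ) • x)) ∂ν = 0 := by
      rw [integral_sub (f := fun x => g (γ i (1:ℝ) • x)) (g := fun x => g (γ i (0:ℝ) • x))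
        (cont_int _ (hg.continuous.comp (hhom i 1)))
        (cont_int _ (hg.continuous.comp (hhom i 0))), hinv i 1 g, hinv i 0 g, sub_self]
    have h2 : ∫ x, (g (γ i (1:ℝ) • x) - g (γ i (0:ℝ) • x)) ∂ν = ∫ x, V i g x ∂ν := by
      calc ∫ x, (g (γ i (1:ℝ) • x) - g (γ i (0:ℝ) • x)) ∂ν
          = ∫ x, (∫ t in Set.Ioc (0:ℝ) 1, V i g (γ i t • x)) ∂ν := by
            refine integral_congr_ae (Filter.Eventually.of_forall fun x => ?_)
            exact (hFTC x).trans
              (intervalIntegral.integral_of_le (by norm_num : (0:ℝ) ≤ 1))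
        _ = ∫ t in Set.Ioc (0:ℝ) 1, (∫ x, V i g (γ i t • x) ∂ν) := hswap
        _ = ∫ t in Set.Ioc (0:ℝ) 1, (∫ x, V i g x ∂ν) := by
            refine setIntegral_congr_fun measurableSet_Ioc fun t _ => hinv i t (V i g)
        _ = ∫ x, V i g x ∂ν := by
            simp [Real.volume_Ioc]
    rw [← h2, h1]
  -- assemble
  have hcont1 : ∀ i : Fin r, Continuous (V i (V i f)) :=
    fun i => (hVsmooth i (V i f) (hVsmooth i f hf)).continuous
  have hcont2 : ∀ i : Fin r, Continuous (fun x => ∑ k, c i k i * V k f x) :=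
    fun i => continuous_finset_sum _ fun k _ =>
      continuous_const.mul (hVsmooth k f hf).continuous
  rw [integral_finset_sum _ (fun i _ =>
    cont_int (fun x => V i (V i f) x + ∑ k, c i k i * V k f x) ((hcont1 i).add (hcont2 i)))]
  refine Finset.sum_eq_zero fun i _ => ?_
  rw [integral_add (cont_int _ (hcont1 i)) (cont_int _ (hcont2 i)),
    key i (V i f) (hVsmooth i f hf), zero_add,
    integral_finset_sum _ (fun k _ =>
      cont_int (fun x => c i k i * V k f x) (continuous_const.mul (hVsmooth k f hf).continuous))]
  refine Finset.sum_eq_zero fun k _ => ?_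
  rw [MeasureTheory.integral_const_mul, key k f hf, mul_zero]
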